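/- The bracket M on F ⊕ F* defined by M(x,y) := μ(x,y) + ψ(x,y) for x,y ∈ F, M(x,ξ) := −ad*γ_ξ x + ad*μ_x ξ = −M(ξ,x) for x ∈ F, ξ ∈ F*, and M(ξ,η) := γ(ξ,η) for ξ,η ∈ F*, is a Lie bracket on F ⊕ F* (bilinear, alternating, satisfying the Jacobi identity), and it leaves invariant the canonical scalar product ⟨x+ξ, y+η⟩ := ⟨ξ,y⟩ + ⟨η,x⟩, i.e. ⟨M(u,v), w⟩ + ⟨v, M(u,w)⟩ = 0 for all u,v,w ∈ F ⊕ F*. (F ⊕ F* with M is the double of the quasi-Lie bialgebra (F, μ, γ, ψ).) -/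

import Mathlib

/-- Jacobiator of a bracket. -/
def Stmt19Jac {A : Type*} [AddCommGroup A] (M : A → A → A) (u v w : A) : A :=
  M (M u v) w + M (M v w) u + M (M w u) v

theorem Stmt19Jac_cyc {A : Type*} [AddCommGroup A] (M : A → A → A) (u v w : A) :
    Stmt19Jac M u v w = Stmt19Jac M v w u := by
  unfold Stmt19Jac; abel

theorem Stmt19Jac_add₁ {A : Type*} [AddCommGroup A] (M : A → A → A)
    (hl : ∀ a b : A, M (a + b) = M a + M b)
    (hr : ∀ a b c : A, M a (b + c) = M a b + M a c)
    (u u' v w : A) :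
    Stmt19Jac M (u + u') v w = Stmt19Jac M u v w + Stmt19Jac M u' v w := by
  unfold Stmt19Jac
  have h1 : M (u + u') v = M u v + M u' v := by rw [hl]; rfl
  have h2 : M (M u v + M u' v) w = M (M u v) w + M (M u' v) w := by rw [hl]; rfl
  have h3 : M (M v w) (u + u') = M (M v w) u + M (M v w) u' := hr _ _ _
  have h4 : M w (u + u') = M w u + M w u' := hr _ _ _
  have h5 : M (M w u + M w u') v = M (M w u) v + M (M w u') v := by rw [hl]; rfl
  rw [h1, h2, h3, h4, h5]; abel

/-- Let `(F, μ, γ, ψ)` be a quasi-Lie bialgebra on a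
finite-dimensional real vector space `F`, with coadjoint actions
`aμ x ξ = ad*μ_x ξ` (`⟨ad*μ_x ξ, y⟩ = −⟨ξ, μ(x,y)⟩`) and
`aγ ξ x = ad*γ_ξ x` (`⟨η, ad*γ_ξ x⟩ = −⟨γ(ξ,η), x⟩`).
The bracket `M` on `F ⊕ F*` given by `M(x,y) = μ(x,y) + ψ(x,y)`,
`M(x,ξ) = −ad*γ_ξ x + ad*μ_x ξ = −M(ξ,x)`, `M(ξ,η) = γ(ξ,η)` is a Lie bracket
(bilinear, alternating, Jacobi) and leaves invariant the canonical scalar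
product `⟨x+ξ, y+η⟩ = ⟨ξ,y⟩ + ⟨η,x⟩`. -/
theorem stmt_19 {F : Type*} [AddCommGroup F] [Module ℝ F] [FiniteDimensional ℝ F]
    (μ : F →ₗ[ℝ] F →ₗ[ℝ] F) (hμalt : ∀ x : F, μ x x = 0)
    (γ : Module.Dual ℝ F →ₗ[ℝ] Module.Dual ℝ F →ₗ[ℝ] Module.Dual ℝ F)
    (hγalt : ∀ ξ : Module.Dual ℝ F, γ ξ ξ = 0)
    (hγjac : ∀ ξ η ζ : Module.Dual ℝ F,
      γ (γ ξ η) ζ + γ (γ η ζ) ξ + γ (γ ζ ξ) η = 0)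
    (ψ : F →ₗ[ℝ] F →ₗ[ℝ] Module.Dual ℝ F)
    (hψ1 : ∀ x : F, ψ x x = 0)
    (hψ2 : ∀ x y z : F, ψ x y z = -(ψ x z y))
    (aμ : F → Module.Dual ℝ F → Module.Dual ℝ F)
    (haμ : ∀ (x : F) (ξ : Module.Dual ℝ F) (y : F), aμ x ξ y = -(ξ (μ x y)))
    (aγ : Module.Dual ℝ F → F → F)
    (haγ : ∀ (ξ η : Module.Dual ℝ F) (x : F), η (aγ ξ x) = -(γ ξ η x))
    -- (ii): the cobracket dual to `γ` is a derivation with respect to `μ`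
    (hii : ∀ (x y : F) (ξ η : Module.Dual ℝ F),
      γ ξ η (μ x y) =
        -((γ (aμ x ξ) η + γ ξ (aμ x η)) y) + (γ (aμ y ξ) η + γ ξ (aμ y η)) x)
    -- (iii): the Jacobiator of `μ` is controlled by `ψ` and `γ`
    (hiii : ∀ x y z : F,
      μ (μ x y) z + μ (μ y z) x + μ (μ z x) y =
        -(aγ (ψ y z) x + aγ (ψ z x) y + aγ (ψ x y) z))
    -- (iv): cyclic invariance condition on `ψ`
    (hiv : ∀ x y z w : F,
      ψ (μ x y) z w + ψ (μ y z) x w + ψ (μ z x) y w =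
        -(ψ y z (μ x w) + ψ z x (μ y w) + ψ x y (μ z w)))
    (M : F × Module.Dual ℝ F → F × Module.Dual ℝ F → F × Module.Dual ℝ F)
    (hM : ∀ (x y : F) (ξ η : Module.Dual ℝ F),
      M (x, ξ) (y, η) =
        (μ x y - aγ η x + aγ ξ y, ψ x y + aμ x η - aμ y ξ + γ ξ η)) :
    (∀ u v : F × Module.Dual ℝ F, M (u + v) = M u + M v) ∧
    (∀ (c : ℝ) (u : F × Module.Dual ℝ F), M (c • u) = c • M u) ∧
    (∀ u v w : F × Module.Dual ℝ F, M u (v + w) = M u v + M u w) ∧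
    (∀ (c : ℝ) (u v : F × Module.Dual ℝ F), M u (c • v) = c • M u v) ∧
    (∀ u : F × Module.Dual ℝ F, M u u = 0) ∧
    (∀ u v w : F × Module.Dual ℝ F,
      M (M u v) w + M (M v w) u + M (M w u) v = 0) ∧
    (∀ u v w : F × Module.Dual ℝ F,
      ((M u v).2 w.1 + w.2 (M u v).1) + (v.2 (M u w).1 + (M u w).2 v.1) = 0) := by
  classical
  -- dual separation
  have dext : ∀ a b : F, (∀ φ : Module.Dual ℝ F, φ a = φ b) → a = b := by
    intro a b h
    have h2 : ∀ φ : Module.Dual ℝ F, φ (a - b) = 0 := by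
      intro φ; rw [map_sub, h φ, sub_self]
    exact sub_eq_zero.mp ((Module.forall_dual_apply_eq_zero_iff ℝ (a - b)).mp h2)
  have dext0 : ∀ a : F, (∀ φ : Module.Dual ℝ F, φ a = 0) → a = 0 := by
    intro a h; exact (Module.forall_dual_apply_eq_zero_iff ℝ a).mp h
  -- antisymmetry
  have hμa : ∀ a b : F, μ a b = -(μ b a) := by
    intro a b
    have h := hμalt (a + b)
    simp only [map_add, LinearMap.add_apply, hμalt, zero_add, add_zero] at h
    exact eq_neg_of_add_eq_zero_right h
  have hγa : ∀ α β : Module.Dual ℝ F, γ α β = -(γ β α) := by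
    intro a b
    have h := hγalt (a + b)
    simp only [map_add, LinearMap.add_apply, hγalt, zero_add, add_zero] at h
    exact eq_neg_of_add_eq_zero_right h
  have hψa : ∀ a b : F, ψ a b = -(ψ b a) := by
    intro a b
    have h := hψ1 (a + b)
    simp only [map_add, LinearMap.add_apply, hψ1, zero_add, add_zero] at h
    exact eq_neg_of_add_eq_zero_right h
  -- scalar antisymmetry
  have hμs : ∀ (φ : Module.Dual ℝ F) (a b : F), φ (μ a b) = -(φ (μ b a)) := by
    intro φ a b; rw [hμa a b, map_neg]
  have hγs : ∀ (α β : Module.Dual ℝ F) (x : F), γ α β x = -(γ β α x) := by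
    intro α β x; rw [hγa α β]; simp
  have hψs1 : ∀ (a b w : F), ψ a b w = -(ψ b a w) := by
    intro a b w; rw [hψa a b]; simp
  have hγψs : ∀ (a b : F) (ζ : Module.Dual ℝ F) (y : F),
      γ (ψ a b) ζ y = -(γ (ψ b a) ζ y) := by
    intro a b ζ y; rw [hψa a b]; simp
  have hγγs : ∀ (α β ζ : Module.Dual ℝ F) (x : F),
      γ (γ α β) ζ x = -(γ (γ β α) ζ x) := by
    intro α β ζ x; rw [hγa α β]; simp
  have hμs1 : ∀ (ζ : Module.Dual ℝ F) (a b c : F),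
      ζ (μ (μ a b) c) = -(ζ (μ (μ b a) c)) := by
    intro ζ a b c; rw [hμa a b]; simp
  -- bilinearity of aγ
  have aγ_add1 : ∀ (α β : Module.Dual ℝ F) (x : F),
      aγ (α + β) x = aγ α x + aγ β x := by
    intro α β x; apply dext; intro φ
    simp only [map_add, LinearMap.add_apply, haγ]; ring
  have aγ_add2 : ∀ (α : Module.Dual ℝ F) (x y : F),
      aγ α (x + y) = aγ α x + aγ α y := by
    intro α x y; apply dext; intro φ
    simp only [map_add, LinearMap.add_apply, haγ]; ring
  have aγ_smul1 : ∀ (c : ℝ) (α : Module.Dual ℝ F) (x : F),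
      aγ (c • α) x = c • aγ α x := by
    intro c α x; apply dext; intro φ
    simp only [map_smul, LinearMap.smul_apply, smul_eq_mul, haγ]; ring
  have aγ_smul2 : ∀ (c : ℝ) (α : Module.Dual ℝ F) (x : F),
      aγ α (c • x) = c • aγ α x := by
    intro c α x; apply dext; intro φ
    simp only [map_smul, LinearMap.smul_apply, smul_eq_mul, haγ]; ring
  have aγ_zero1 : ∀ x : F, aγ 0 x = 0 := by
    intro x; apply dext0; intro φ; simp [haγ]
  have aγ_zero2 : ∀ α : Module.Dual ℝ F, aγ α 0 = 0 := by
    intro α; apply dext0; intro φ; simp [haγ]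
  have aγ_neg1 : ∀ (α : Module.Dual ℝ F) (x : F), aγ (-α) x = -(aγ α x) := by
    intro α x; apply dext; intro φ
    simp only [map_neg, LinearMap.neg_apply, haγ]; try ring
  have aγ_neg2 : ∀ (α : Module.Dual ℝ F) (x : F), aγ α (-x) = -(aγ α x) := by
    intro α x; apply dext; intro φ
    simp only [map_neg, LinearMap.neg_apply, haγ]; try ring
  -- bilinearity of aμ
  have aμ_add1 : ∀ (x y : F) (α : Module.Dual ℝ F),
      aμ (x + y) α = aμ x α + aμ y α := by
    intro x y α; ext w
    simp only [map_add, LinearMap.add_apply, haμ]; ring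
  have aμ_add2 : ∀ (x : F) (α β : Module.Dual ℝ F),
      aμ x (α + β) = aμ x α + aμ x β := by
    intro x α β; ext w
    simp only [map_add, LinearMap.add_apply, haμ]; ring
  have aμ_smul1 : ∀ (c : ℝ) (x : F) (α : Module.Dual ℝ F),
      aμ (c • x) α = c • aμ x α := by
    intro c x α; ext w
    simp only [map_smul, LinearMap.smul_apply, smul_eq_mul, haμ]; ring
  have aμ_smul2 : ∀ (c : ℝ) (x : F) (α : Module.Dual ℝ F),
      aμ x (c • α) = c • aμ x α := by
    intro c x α; ext w
    simp only [map_smul, LinearMap.smul_apply, smul_eq_mul, haμ]; ring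
  have aμ_zero1 : ∀ α : Module.Dual ℝ F, aμ 0 α = 0 := by
    intro α; ext w; simp [haμ]
  have aμ_zero2 : ∀ x : F, aμ x 0 = 0 := by
    intro x; ext w; simp [haμ]
  have aμ_neg1 : ∀ (x : F) (α : Module.Dual ℝ F), aμ (-x) α = -(aμ x α) := by
    intro x α; ext w; simp only [map_neg, LinearMap.neg_apply, haμ]; try ring
  have aμ_neg2 : ∀ (x : F) (α : Module.Dual ℝ F), aμ x (-α) = -(aμ x α) := by
    intro x α; ext w; simp only [map_neg, LinearMap.neg_apply, haμ]; try ring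
  -- key composite reductions
  have key1 : ∀ (φ ζ : Module.Dual ℝ F) (x y : F),
      φ (μ (aγ ζ x) y) = -(γ ζ (aμ y φ) x) := by
    intro φ ζ x y
    rw [hμa (aγ ζ x) y, map_neg]
    rw [show φ (μ y (aγ ζ x)) = -(aμ y φ (aγ ζ x)) by rw [haμ]; ring]
    rw [haγ]; ring
  have key2 : ∀ (ζ : Module.Dual ℝ F) (x y w : F),
      ψ (aγ ζ x) y w = -(γ ζ (ψ y w) x) := by
    intro ζ x y w
    rw [hψs1 (aγ ζ x) y w, hψ2 y (aγ ζ x) w, haγ]; ring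
  -- special forms of the bracket
  have hMge : ∀ (a : F) (α : Module.Dual ℝ F) (b : F),
      M (a, α) (b, 0) = (μ a b + aγ α b, ψ a b - aμ b α) := by
    intro a α b; rw [hM]
    simp [aγ_zero1, aμ_zero2, map_zero]
  have hMgf : ∀ (a : F) (α β : Module.Dual ℝ F),
      M (a, α) (0, β) = (-(aγ β a), aμ a β + γ α β) := by
    intro a α β; rw [hM]
    simp [aγ_zero2, aμ_zero1, map_zero]
  -- the seven claims
  have claim1 : ∀ u v : F × Module.Dual ℝ F, M (u + v) = M u + M v := by
    intro u v; funext w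
    obtain ⟨x, ξ⟩ := u; obtain ⟨y, η⟩ := v; obtain ⟨z, ζ⟩ := w
    show M ((x, ξ) + (y, η)) (z, ζ) = M (x, ξ) (z, ζ) + M (y, η) (z, ζ)
    rw [Prod.mk_add_mk, hM, hM, hM, Prod.mk_add_mk]
    simp only [Prod.mk.injEq, map_add, LinearMap.add_apply,
      aγ_add1, aγ_add2, aμ_add1, aμ_add2]
    try constructor
    all_goals abel
  have claim3 : ∀ u v w : F × Module.Dual ℝ F, M u (v + w) = M u v + M u w := by
    intro u v w
    obtain ⟨x, ξ⟩ := u; obtain ⟨y, η⟩ := v; obtain ⟨z, ζ⟩ := w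
    rw [Prod.mk_add_mk, hM, hM, hM, Prod.mk_add_mk]
    simp only [Prod.mk.injEq, map_add, LinearMap.add_apply,
      aγ_add1, aγ_add2, aμ_add1, aμ_add2]
    try constructor
    all_goals abel
  have claim2 : ∀ (c : ℝ) (u : F × Module.Dual ℝ F), M (c • u) = c • M u := by
    intro c u; funext w
    obtain ⟨x, ξ⟩ := u; obtain ⟨z, ζ⟩ := w
    show M (c • (x, ξ)) (z, ζ) = c • M (x, ξ) (z, ζ)
    rw [Prod.smul_mk, hM, hM, Prod.smul_mk]
    simp only [Prod.mk.injEq, map_smul, LinearMap.smul_apply,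
      aγ_smul1, aγ_smul2, aμ_smul1, aμ_smul2, smul_sub, smul_add]
    try constructor
    all_goals abel
  have claim4 : ∀ (c : ℝ) (u v : F × Module.Dual ℝ F), M u (c • v) = c • M u v := by
    intro c u v
    obtain ⟨x, ξ⟩ := u; obtain ⟨y, η⟩ := v
    rw [Prod.smul_mk, hM, hM, Prod.smul_mk]
    simp only [Prod.mk.injEq, map_smul, LinearMap.smul_apply,
      aγ_smul1, aγ_smul2, aμ_smul1, aμ_smul2, smul_sub, smul_add]
    try constructor
    all_goals abel
  have claim5 : ∀ u : F × Module.Dual ℝ F, M u u = 0 := by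
    intro u; obtain ⟨x, ξ⟩ := u
    rw [hM]
    simp only [hμalt, hψ1, hγalt, Prod.mk_eq_zero]
    try constructor
    all_goals abel
  -- pure-type Jacobi identities
  have jFFF : ∀ x y z : F,
      Stmt19Jac M (x, (0 : Module.Dual ℝ F)) (y, 0) (z, 0) = 0 := by
    intro x y z
    unfold Stmt19Jac
    simp only [hMge, aγ_zero1, aμ_zero2, map_zero, add_zero, sub_zero,
      Prod.mk_add_mk, Prod.mk_eq_zero]
    constructor
    · apply dext0; intro φ
      have h := congrArg (fun t : F => φ t) (hiii x y z)
      simp only [map_add, map_neg, haγ] at h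
      simp only [map_add, map_neg, haγ]
      linarith
    · ext w
      simp only [LinearMap.add_apply, LinearMap.sub_apply, LinearMap.zero_apply, haμ]
      linarith [hiv x y z w]
  have jFFD : ∀ (x y : F) (ζ : Module.Dual ℝ F),
      Stmt19Jac M (x, (0 : Module.Dual ℝ F)) (y, 0) ((0 : F), ζ) = 0 := by
    intro x y ζ
    unfold Stmt19Jac
    simp only [hMge, hMgf, aγ_zero1, aγ_zero2, aμ_zero1, aμ_zero2, map_zero,
      add_zero, zero_add, sub_zero, zero_sub, neg_zero, map_neg,
      LinearMap.neg_apply, LinearMap.zero_apply, aγ_neg1, aγ_neg2, aμ_neg1, aμ_neg2,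
      Prod.mk_add_mk, Prod.mk_eq_zero]
    constructor
    · apply dext0; intro φ
      have h := hii x y ζ φ
      simp only [LinearMap.add_apply] at h
      simp only [map_add, map_sub, map_neg, haγ, key1, LinearMap.neg_apply]
      linarith
    · ext w
      have h := congrArg (fun t : F => ζ t) (hiii x y w)
      simp only [map_add, map_neg, haγ] at h
      simp only [LinearMap.add_apply, LinearMap.sub_apply, LinearMap.neg_apply,
        LinearMap.zero_apply, map_neg, haμ, key2]
      linarith [hμs ζ y (μ x w), hμs ζ x (μ y w), hμs1 ζ x w y, hμs1 ζ y w x,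
        hγs ζ (ψ x w) y, hγs ζ (ψ y w) x, hγψs w x ζ y, hγψs y w ζ x]
  have jFDD : ∀ (x : F) (η ζ : Module.Dual ℝ F),
      Stmt19Jac M (x, (0 : Module.Dual ℝ F)) ((0 : F), η) ((0 : F), ζ) = 0 := by
    intro x η ζ
    unfold Stmt19Jac
    simp only [hMge, hMgf, aγ_zero1, aγ_zero2, aμ_zero1, aμ_zero2, map_zero,
      add_zero, zero_add, sub_zero, zero_sub, neg_zero, map_neg,
      LinearMap.neg_apply, LinearMap.zero_apply, aγ_neg1, aγ_neg2, aμ_neg1, aμ_neg2,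
      neg_neg, Prod.mk_add_mk, Prod.mk_eq_zero]
    constructor
    · apply dext0; intro φ
      have h := congrArg (fun t : Module.Dual ℝ F => t x) (hγjac η ζ φ)
      simp only [LinearMap.add_apply, LinearMap.zero_apply] at h
      simp only [map_add, map_neg, haγ, neg_neg]
      linarith [hγs η (γ ζ φ) x, hγs ζ (γ η φ) x, hγγs φ η ζ x]
    · ext w
      have h := hii x w η ζ
      simp only [LinearMap.add_apply] at h
      simp only [LinearMap.add_apply, LinearMap.sub_apply, LinearMap.neg_apply,
        LinearMap.zero_apply, map_neg, haμ, key1, neg_neg]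
      linarith [hγs η (aμ x ζ) w, hγs ζ (aμ w η) x]
  have jDDD : ∀ ξ η ζ : Module.Dual ℝ F,
      Stmt19Jac M ((0 : F), ξ) ((0 : F), η) ((0 : F), ζ) = 0 := by
    intro ξ η ζ
    unfold Stmt19Jac
    simp only [hMgf, aγ_zero1, aγ_zero2, aμ_zero1, aμ_zero2, map_zero,
      add_zero, zero_add, neg_zero, Prod.mk_add_mk, Prod.mk_eq_zero]
    exact ⟨by simp, hγjac ξ η ζ⟩
  -- assembling the general Jacobi identity
  have JC := Stmt19Jac_cyc M
  have JA1 := Stmt19Jac_add₁ M claim1 claim3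
  have JA2 : ∀ u v v' w : F × Module.Dual ℝ F,
      Stmt19Jac M u (v + v') w = Stmt19Jac M u v w + Stmt19Jac M u v' w := by
    intro u v v' w
    calc Stmt19Jac M u (v + v') w = Stmt19Jac M (v + v') w u := JC _ _ _
      _ = Stmt19Jac M v w u + Stmt19Jac M v' w u := JA1 _ _ _ _
      _ = Stmt19Jac M u v w + Stmt19Jac M u v' w := by
          rw [JC v w u, JC w u v, JC v' w u, JC w u v']
  have JA3 : ∀ u v w w' : F × Module.Dual ℝ F,
      Stmt19Jac M u v (w + w') = Stmt19Jac M u v w + Stmt19Jac M u v w' := by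
    intro u v w w'
    calc Stmt19Jac M u v (w + w') = Stmt19Jac M v (w + w') u := JC _ _ _
      _ = Stmt19Jac M v w u + Stmt19Jac M v w' u := JA2 _ _ _ _
      _ = Stmt19Jac M u v w + Stmt19Jac M u v w' := by
          rw [JC v w u, JC w u v, JC v w' u, JC w' u v]
  have claim6 : ∀ u v w : F × Module.Dual ℝ F,
      M (M u v) w + M (M v w) u + M (M w u) v = 0 := by
    intro u v w
    obtain ⟨x, ξ⟩ := u; obtain ⟨y, η⟩ := v; obtain ⟨z, ζ⟩ := w
    show Stmt19Jac M (x, ξ) (y, η) (z, ζ) = 0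
    have dx : ((x, ξ) : F × Module.Dual ℝ F) = (x, 0) + (0, ξ) := by
      rw [Prod.mk_add_mk, add_zero, zero_add]
    have dy : ((y, η) : F × Module.Dual ℝ F) = (y, 0) + (0, η) := by
      rw [Prod.mk_add_mk, add_zero, zero_add]
    have dz : ((z, ζ) : F × Module.Dual ℝ F) = (z, 0) + (0, ζ) := by
      rw [Prod.mk_add_mk, add_zero, zero_add]
    rw [dx, dy, dz]
    simp only [JA1, JA2, JA3]
    have t1 := jFFF x y z
    have t2 := jFFD x y ζ
    have t3 : Stmt19Jac M (x, (0 : Module.Dual ℝ F)) ((0 : F), η) (z, 0) = 0 := by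
      rw [JC, JC]; exact jFFD z x η
    have t4 := jFDD x η ζ
    have t5 : Stmt19Jac M ((0 : F), ξ) (y, (0 : Module.Dual ℝ F)) (z, 0) = 0 := by
      rw [JC]; exact jFFD y z ξ
    have t6 : Stmt19Jac M ((0 : F), ξ) (y, (0 : Module.Dual ℝ F)) ((0 : F), ζ) = 0 := by
      rw [JC]; exact jFDD y ζ ξ
    have t7 : Stmt19Jac M ((0 : F), ξ) ((0 : F), η) (z, 0) = 0 := by
      rw [JC, JC]; exact jFDD z ξ η
    have t8 := jDDD ξ η ζ
    rw [t1, t2, t3, t4, t5, t6, t7, t8]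
    simp
  have claim7 : ∀ u v w : F × Module.Dual ℝ F,
      ((M u v).2 w.1 + w.2 (M u v).1) + (v.2 (M u w).1 + (M u w).2 v.1) = 0 := by
    intro u v w
    obtain ⟨x, ξ⟩ := u; obtain ⟨y, η⟩ := v; obtain ⟨z, ζ⟩ := w
    rw [hM, hM]
    simp only [LinearMap.add_apply, LinearMap.sub_apply, map_add, map_sub, haμ, haγ]
    linarith [hψ2 x y z, hμs ξ y z, hγs η ζ x]
  exact ⟨claim1, claim2, claim3, claim4, claim5, claim6, claim7⟩
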